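/- Let B be a left S-module and suppose F commutes with direct sums. Then (0,B) is silting (respectively, partial silting) in the comma category (F, S-Mod) if and only if B is silting (respectively, partial silting) as a left S-module. -/

import Mathlib

open CategoryTheory CategoryTheory.Limits

universe v u

section Generic

variable {𝒜 : Type*} [Category.{v} 𝒜]

/-- For a morphism `σ : P₁ ⟶ P₀`, the class `D_σ` of objects `X` such that
`Hom(σ, X)` is surjective. -/
def Dclass {P₁ P₀ : 𝒜} (σ : P₁ ⟶ P₀) : Set 𝒜 :=
  {X | ∀ g : P₁ ⟶ X, ∃ h : P₀ ⟶ X, σ ≫ h = g}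

/-- `Gen T` is the class of objects admitting an epimorphism from a coproduct (direct sum)
of copies of `T`. -/
def Gen (T : 𝒜) : Set 𝒜 :=
  {X | ∃ (ι : Type v) (c : Cofan (fun _ : ι => T)) (_ : IsColimit c) (f : c.pt ⟶ X), Epi f}

variable [HasZeroMorphisms 𝒜]

/-- A projective presentation `P₁ → P₀ → T → 0` of an object `T`. -/
structure ProjPres (T : 𝒜) where
  P₁ : 𝒜
  P₀ : 𝒜
  σ : P₁ ⟶ P₀
  π : P₀ ⟶ T
  projective₁ : Projective P₁
  projective₀ : Projective P₀
  epi : Epi π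
  w : σ ≫ π = 0
  exact : (ShortComplex.mk σ π w).Exact

/-- A class of objects is a torsion class if it is closed under (epimorphic) images,
direct sums (coproducts) and extensions. -/
def IsTorsionClass (𝒞 : Set 𝒜) : Prop :=
  (∀ ⦃X Y : 𝒜⦄ (f : X ⟶ Y), Epi f → X ∈ 𝒞 → Y ∈ 𝒞) ∧
  (∀ (ι : Type v) (Xs : ι → 𝒜) (c : Cofan Xs), IsColimit c → (∀ i, Xs i ∈ 𝒞) → c.pt ∈ 𝒞) ∧
  (∀ (E : ShortComplex 𝒜), E.ShortExact → E.X₁ ∈ 𝒞 → E.X₃ ∈ 𝒞 → E.X₂ ∈ 𝒞)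

/-- `T` is a silting object (with respect to some projective presentation) if it admits a
projective presentation `σ` with `D_σ = Gen T`. -/
def IsSilting (T : 𝒜) : Prop :=
  ∃ p : ProjPres T, Dclass p.σ = Gen T

/-- `T` is a partial silting object if it admits a projective presentation `σ` such that
`D_σ` is a torsion class and `T ∈ D_σ`. -/
def IsPartialSilting (T : 𝒜) : Prop :=
  ∃ p : ProjPres T, IsTorsionClass (Dclass p.σ) ∧ T ∈ Dclass p.σ

end Generic

section CommaZero

variable {𝒜 : Type*} [Category 𝒜] {ℬ : Type*} [Category ℬ]
  [Preadditive 𝒜] [Preadditive ℬ] (F : 𝒜 ⥤ ℬ) [F.Additive]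

instance : HasZeroMorphisms (Comma F (𝟭 ℬ)) where
  zero X Y := ⟨{ left := 0, right := 0, w := by simp }⟩
  comp_zero {X Y} f Z := by
    apply CommaMorphism.ext
    · show f.left ≫ 0 = 0
      simp
    · show f.right ≫ 0 = 0
      simp
  zero_comp X {Y Z} f := by
    apply CommaMorphism.ext
    · show 0 ≫ f.left = 0
      simp
    · show 0 ≫ f.right = 0
      simp

end CommaZero

section ModComma

variable {R S : Type u} [Ring R] [Ring S]
  (F : ModuleCat.{u} R ⥤ ModuleCat.{u} S) [F.Additive]

/-- The object `(P, FP ⊕ Q)` of the comma category `(F, S-Mod)`, with structure map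
`(1,0) : FP ⟶ FP ⊕ Q`; it is isomorphic to `(P, FP) ⊕ (0, Q)`. -/
def pairObj (P : ModuleCat.{u} R) (Q : ModuleCat.{u} S) :
    Comma F (𝟭 (ModuleCat.{u} S)) where
  left := P
  right := ModuleCat.of S (F.obj P × Q)
  hom := ModuleCat.ofHom (LinearMap.inl S (F.obj P) Q)

/-- The morphism `(a, Fa ⊕ b) : (P₁, FP₁ ⊕ Q₁) ⟶ (P₀, FP₀ ⊕ Q₀)` in the comma
category `(F, S-Mod)`.  When `a = σ_A`, `b = σ_B` are projective presentations of `A` and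
`B`, this is the induced projective presentation `σ` of `(0,B) ⊕ (A, FA)`. -/
def pairMap {P₁ P₀ : ModuleCat.{u} R} {Q₁ Q₀ : ModuleCat.{u} S}
    (a : P₁ ⟶ P₀) (b : Q₁ ⟶ Q₀) : pairObj F P₁ Q₁ ⟶ pairObj F P₀ Q₀ where
  left := a
  right := ModuleCat.ofHom (LinearMap.prodMap (F.map a).hom b.hom)
  w := by
    apply ModuleCat.hom_ext
    apply LinearMap.ext
    intro x
    show ((LinearMap.inl S (F.obj P₀) Q₀).comp (F.map a).hom) x
        = ((LinearMap.prodMap (F.map a).hom b.hom).comp (LinearMap.inl S (F.obj P₁) Q₁)) x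
    simp
    first
      | simp [Function.comp_def, LinearMap.prodMap_apply]
      | exact Prod.ext rfl (map_zero _).symm

/-- The object `(M, 0)` of the comma category. -/
def leftObj (M : ModuleCat.{u} R) : Comma F (𝟭 (ModuleCat.{u} S)) where
  left := M
  right := ModuleCat.of S PUnit
  hom := 0

/-- The object `(0, N)` of the comma category. -/
def rightObj (N : ModuleCat.{u} S) : Comma F (𝟭 (ModuleCat.{u} S)) where
  left := ModuleCat.of R PUnit
  right := N
  hom := 0

/-- The object `(M, FM)` of the comma category, with the identity structure map. -/
def diagObj (M : ModuleCat.{u} R) : Comma F (𝟭 (ModuleCat.{u} S)) where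
  left := M
  right := F.obj M
  hom := 𝟙 (F.obj M)

end ModComma

namespace RightObjSilting

open CategoryTheory CategoryTheory.Limits

variable {R S : Type u} [Ring R] [Ring S]
  (F : ModuleCat.{u} R ⥤ ModuleCat.{u} S) [F.Additive]

instance punitSubsingletonFrom {T : Type u} [Ring T] (M : ModuleCat.{u} T) :
    Subsingleton (ModuleCat.of T PUnit ⟶ M) :=
  ⟨fun f g => ModuleCat.hom_ext <| LinearMap.ext fun (x : PUnit) => by
    haveI : Subsingleton (ModuleCat.of T PUnit).carrier := inferInstanceAs (Subsingleton PUnit)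
    rw [Subsingleton.elim x 0, map_zero, map_zero]⟩

instance punitSubsingletonTo {T : Type u} [Ring T] (M : ModuleCat.{u} T) :
    Subsingleton (M ⟶ ModuleCat.of T PUnit) :=
  ⟨fun f g => ModuleCat.hom_ext <| LinearMap.ext fun x => by
    haveI : Subsingleton (ModuleCat.of T PUnit).carrier := inferInstanceAs (Subsingleton PUnit)
    exact Subsingleton.elim _ _⟩

@[simp] lemma zero_left {X Y : Comma F (𝟭 (ModuleCat.{u} S))} :
    (0 : X ⟶ Y).left = 0 := rfl

@[simp] lemma zero_right {X Y : Comma F (𝟭 (ModuleCat.{u} S))} :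
    (0 : X ⟶ Y).right = 0 := rfl

lemma epi_of_components {X Y : Comma F (𝟭 (ModuleCat.{u} S))} (f : X ⟶ Y)
    (h1 : Epi f.left) (h2 : Epi f.right) : Epi f := by
  constructor
  intro Z u v huv
  apply CommaMorphism.ext
  · exact (cancel_epi f.left).mp (congrArg CommaMorphism.left huv)
  · exact (cancel_epi f.right).mp (congrArg CommaMorphism.right huv)

lemma mono_of_components {X Y : Comma F (𝟭 (ModuleCat.{u} S))} (f : X ⟶ Y)
    (h1 : Mono f.left) (h2 : Mono f.right) : Mono f := by
  constructor
  intro Z u v huv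
  apply CommaMorphism.ext
  · exact (cancel_mono f.left).mp (congrArg CommaMorphism.left huv)
  · exact (cancel_mono f.right).mp (congrArg CommaMorphism.right huv)

lemma mono_components {X Y : Comma F (𝟭 (ModuleCat.{u} S))} (f : X ⟶ Y) [Mono f] :
    Mono f.left ∧ Mono f.right := by
  let W : Comma F (𝟭 (ModuleCat.{u} S)) :=
    { left := kernel f.left
      right := kernel f.right
      hom := kernel.lift f.right (F.map (kernel.ι f.left) ≫ X.hom)
        (by have w := f.w
            simp only [Functor.id_map] at w
            rw [Category.assoc, ← w, ← Category.assoc, ← F.map_comp, kernel.condition,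
              F.map_zero, zero_comp]) }
  let k : W ⟶ X :=
    { left := kernel.ι f.left
      right := kernel.ι f.right
      w := by
        show F.map (kernel.ι f.left) ≫ X.hom = W.hom ≫ kernel.ι f.right
        rw [kernel.lift_ι] }
  have hk : k ≫ f = 0 := by
    apply CommaMorphism.ext
    · show kernel.ι f.left ≫ f.left = 0
      simp
    · show kernel.ι f.right ≫ f.right = 0
      simp
  have hk0 : k = 0 := by
    rw [← cancel_mono f, hk, zero_comp]
  have hl : kernel.ι f.left = 0 := congrArg CommaMorphism.left hk0
  have hr : kernel.ι f.right = 0 := congrArg CommaMorphism.right hk0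
  constructor
  · apply Preadditive.mono_of_cancel_zero
    intro Z g hg
    rw [← kernel.lift_ι f.left g hg, hl, comp_zero]
  · apply Preadditive.mono_of_cancel_zero
    intro Z g hg
    rw [← kernel.lift_ι f.right g hg, hr, comp_zero]

variable [PreservesFiniteColimits F]

lemma epi_components {X Y : Comma F (𝟭 (ModuleCat.{u} S))} (f : X ⟶ Y) [Epi f] :
    Epi f.left ∧ Epi f.right := by
  let ψ : F.obj (cokernel f.left) ⟶ cokernel f.right :=
    (PreservesCokernel.iso F f.left).hom ≫
      cokernel.desc (F.map f.left) (Y.hom ≫ cokernel.π f.right)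
        (by have w := f.w
            simp only [Functor.id_map] at w
            rw [← Category.assoc, w, Category.assoc, cokernel.condition, comp_zero])
  let W : Comma F (𝟭 (ModuleCat.{u} S)) :=
    { left := cokernel f.left
      right := cokernel f.right
      hom := ψ }
  let p : Y ⟶ W :=
    { left := cokernel.π f.left
      right := cokernel.π f.right
      w := by
        show F.map (cokernel.π f.left) ≫ ψ = Y.hom ≫ cokernel.π f.right
        have h1 : F.map (cokernel.π f.left) ≫ (PreservesCokernel.iso F f.left).hom
            = cokernel.π (F.map f.left) := by
          rw [← π_comp_cokernelComparison f.left F, ← PreservesCokernel.iso_inv,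
            Category.assoc, Iso.inv_hom_id, Category.comp_id]
        show F.map (cokernel.π f.left) ≫ (PreservesCokernel.iso F f.left).hom ≫ _
          = Y.hom ≫ cokernel.π f.right
        rw [← Category.assoc, h1, cokernel.π_desc] }
  have hfp : f ≫ p = f ≫ (0 : Y ⟶ W) := by
    apply CommaMorphism.ext
    · show f.left ≫ cokernel.π f.left = f.left ≫ 0
      simp
    · show f.right ≫ cokernel.π f.right = f.right ≫ 0
      simp
  have hp0 : p = 0 := (cancel_epi f).mp hfp
  have hl : cokernel.π f.left = 0 := congrArg CommaMorphism.left hp0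
  have hr : cokernel.π f.right = 0 := congrArg CommaMorphism.right hp0
  constructor
  · apply Preadditive.epi_of_cancel_zero
    intro Z g hg
    rw [← cokernel.π_desc f.left g hg, hl, zero_comp]
  · apply Preadditive.epi_of_cancel_zero
    intro Z g hg
    rw [← cokernel.π_desc f.right g hg, hr, zero_comp]



section Proj

variable {J : Type w} [Category.{w'} J]

lemma fstPreservesColimit (K : J ⥤ Comma F (𝟭 (ModuleCat.{u} S)))
    [HasColimit (K ⋙ Comma.fst F (𝟭 (ModuleCat.{u} S)))]
    [HasColimit (K ⋙ Comma.snd F (𝟭 (ModuleCat.{u} S)))]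
    [PreservesColimit (K ⋙ Comma.fst F (𝟭 (ModuleCat.{u} S))) F] :
    PreservesColimit K (Comma.fst F (𝟭 (ModuleCat.{u} S))) := by
  constructor
  intro c hc
  let t₁ := colimit.isColimit (K ⋙ Comma.fst F (𝟭 (ModuleCat.{u} S)))
  let t₂ := colimit.isColimit (K ⋙ Comma.snd F (𝟭 (ModuleCat.{u} S)))
  let ht := Comma.coconeOfPreservesIsColimit K t₁ t₂
  let e := IsColimit.uniqueUpToIso ht hc
  let e' := (Cocones.functoriality K (Comma.fst F (𝟭 (ModuleCat.{u} S)))).mapIso e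
  have h1 : IsColimit ((Comma.fst F (𝟭 (ModuleCat.{u} S))).mapCocone
      (Comma.coconeOfPreserves K t₁ (colimit.cocone _))) :=
    IsColimit.ofIsoColimit t₁ (Cocones.ext (Iso.refl _) (fun j => by
      simp [Comma.coconeOfPreserves]))
  exact ⟨IsColimit.ofIsoColimit h1 e'⟩

lemma sndPreservesColimit (K : J ⥤ Comma F (𝟭 (ModuleCat.{u} S)))
    [HasColimit (K ⋙ Comma.fst F (𝟭 (ModuleCat.{u} S)))]
    [HasColimit (K ⋙ Comma.snd F (𝟭 (ModuleCat.{u} S)))]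
    [PreservesColimit (K ⋙ Comma.fst F (𝟭 (ModuleCat.{u} S))) F] :
    PreservesColimit K (Comma.snd F (𝟭 (ModuleCat.{u} S))) := by
  constructor
  intro c hc
  let t₁ := colimit.isColimit (K ⋙ Comma.fst F (𝟭 (ModuleCat.{u} S)))
  let t₂ := colimit.isColimit (K ⋙ Comma.snd F (𝟭 (ModuleCat.{u} S)))
  let ht := Comma.coconeOfPreservesIsColimit K t₁ t₂
  let e := IsColimit.uniqueUpToIso ht hc
  let e' := (Cocones.functoriality K (Comma.snd F (𝟭 (ModuleCat.{u} S)))).mapIso e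
  have h1 : IsColimit ((Comma.snd F (𝟭 (ModuleCat.{u} S))).mapCocone
      (Comma.coconeOfPreserves K t₁ (colimit.cocone _))) :=
    IsColimit.ofIsoColimit t₂ (Cocones.ext (Iso.refl _) (fun j => by
      simp [Comma.coconeOfPreserves]))
  exact ⟨IsColimit.ofIsoColimit h1 e'⟩

lemma fstPreservesLimit (K : J ⥤ Comma F (𝟭 (ModuleCat.{u} S)))
    [HasLimit (K ⋙ Comma.fst F (𝟭 (ModuleCat.{u} S)))]
    [HasLimit (K ⋙ Comma.snd F (𝟭 (ModuleCat.{u} S)))] :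
    PreservesLimit K (Comma.fst F (𝟭 (ModuleCat.{u} S))) := by
  constructor
  intro c hc
  let t₁ := limit.isLimit (K ⋙ Comma.fst F (𝟭 (ModuleCat.{u} S)))
  let t₂ := limit.isLimit (K ⋙ Comma.snd F (𝟭 (ModuleCat.{u} S)))
  let ht := Comma.coneOfPreservesIsLimit K t₁ t₂
  let e := IsLimit.uniqueUpToIso ht hc
  let e' := (Cones.functoriality K (Comma.fst F (𝟭 (ModuleCat.{u} S)))).mapIso e
  have h1 : IsLimit ((Comma.fst F (𝟭 (ModuleCat.{u} S))).mapCone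
      (Comma.coneOfPreserves K (limit.cone _) t₂)) :=
    IsLimit.ofIsoLimit t₁ (Cones.ext (Iso.refl _) (fun j => by
      simp [Comma.coneOfPreserves]))
  exact ⟨IsLimit.ofIsoLimit h1 e'⟩

lemma sndPreservesLimit (K : J ⥤ Comma F (𝟭 (ModuleCat.{u} S)))
    [HasLimit (K ⋙ Comma.fst F (𝟭 (ModuleCat.{u} S)))]
    [HasLimit (K ⋙ Comma.snd F (𝟭 (ModuleCat.{u} S)))] :
    PreservesLimit K (Comma.snd F (𝟭 (ModuleCat.{u} S))) := by
  constructor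
  intro c hc
  let t₁ := limit.isLimit (K ⋙ Comma.fst F (𝟭 (ModuleCat.{u} S)))
  let t₂ := limit.isLimit (K ⋙ Comma.snd F (𝟭 (ModuleCat.{u} S)))
  let ht := Comma.coneOfPreservesIsLimit K t₁ t₂
  let e := IsLimit.uniqueUpToIso ht hc
  let e' := (Cones.functoriality K (Comma.snd F (𝟭 (ModuleCat.{u} S)))).mapIso e
  have h1 : IsLimit ((Comma.snd F (𝟭 (ModuleCat.{u} S))).mapCone
      (Comma.coneOfPreserves K (limit.cone _) t₂)) :=
    IsLimit.ofIsoLimit t₂ (Cones.ext (Iso.refl _) (fun j => by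
      simp [Comma.coneOfPreserves]))
  exact ⟨IsLimit.ofIsoLimit h1 e'⟩

end Proj

instance : (Comma.fst F (𝟭 (ModuleCat.{u} S))).PreservesZeroMorphisms := ⟨fun _ _ => rfl⟩
instance : (Comma.snd F (𝟭 (ModuleCat.{u} S))).PreservesZeroMorphisms := ⟨fun _ _ => rfl⟩

instance : PreservesFiniteColimits (Comma.fst F (𝟭 (ModuleCat.{u} S))) :=
  ⟨fun _ _ _ => ⟨fun {K} => fstPreservesColimit F K⟩⟩

instance : PreservesFiniteColimits (Comma.snd F (𝟭 (ModuleCat.{u} S))) :=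
  ⟨fun _ _ _ => ⟨fun {K} => sndPreservesColimit F K⟩⟩

instance : PreservesFiniteLimits (Comma.fst F (𝟭 (ModuleCat.{u} S))) :=
  ⟨fun _ _ _ => ⟨fun {K} => fstPreservesLimit F K⟩⟩

instance : PreservesFiniteLimits (Comma.snd F (𝟭 (ModuleCat.{u} S))) :=
  ⟨fun _ _ _ => ⟨fun {K} => sndPreservesLimit F K⟩⟩

variable [∀ J : Type u, PreservesColimitsOfShape (Discrete J) F]

instance (ι : Type u) : PreservesColimitsOfShape (Discrete ι)
    (Comma.fst F (𝟭 (ModuleCat.{u} S))) :=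
  ⟨fun {K} => fstPreservesColimit F K⟩

instance (ι : Type u) : PreservesColimitsOfShape (Discrete ι)
    (Comma.snd F (𝟭 (ModuleCat.{u} S))) :=
  ⟨fun {K} => sndPreservesColimit F K⟩

section ZeroLemmas

variable {𝒟 : Type*} [Category 𝒟] [Limits.HasZeroMorphisms 𝒟]

lemma epi_of_isZero {A B : 𝒟} (f : A ⟶ B) (h : IsZero B) : Epi f :=
  ⟨fun u v _ => h.eq_of_src u v⟩

lemma isZero_of_epi {A B : 𝒟} (f : A ⟶ B) [Epi f] (h : IsZero A) : IsZero B := by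
  rw [IsZero.iff_id_eq_zero]
  rw [← cancel_epi f, comp_zero, Category.comp_id]
  exact h.eq_of_src f 0

lemma gen_iso {T A B : 𝒟} (e : A ≅ B) (h : A ∈ Gen T) : B ∈ Gen T := by
  obtain ⟨ι, c, hc, f, hf⟩ := h
  exact ⟨ι, c, hc, f ≫ e.hom, epi_comp f e.hom⟩

end ZeroLemmas

lemma punit_from_ext {T : Type u} [Ring T] {M : ModuleCat.{u} T} (f g : ModuleCat.of T PUnit ⟶ M) :
    f = g := Subsingleton.elim f g

lemma punit_to_ext {T : Type u} [Ring T] {M : ModuleCat.{u} T} (f g : M ⟶ ModuleCat.of T PUnit) :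
    f = g := Subsingleton.elim f g

lemma isZero_punit {T : Type u} [Ring T] : IsZero (ModuleCat.of T PUnit) := by
  haveI : Subsingleton (ModuleCat.of T PUnit).carrier := inferInstanceAs (Subsingleton PUnit)
  exact ModuleCat.isZero_of_subsingleton _

lemma isZero_FPUnit : IsZero (F.obj (ModuleCat.of R PUnit)) :=
  F.map_isZero isZero_punit

lemma isZero_comma {X : Comma F (𝟭 (ModuleCat.{u} S))} (h1 : IsZero X.left)
    (h2 : IsZero X.right) : IsZero X := by
  rw [IsZero.iff_id_eq_zero]
  apply CommaMorphism.ext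
  · exact h1.eq_of_src _ _
  · exact h2.eq_of_src _ _

/-- morphism into `rightObj` kills the structure map -/
lemma toI_comp_zero {N : ModuleCat.{u} S} {X : Comma F (𝟭 (ModuleCat.{u} S))}
    (f : X ⟶ rightObj F N) : X.hom ≫ f.right = 0 := by
  have w := f.w
  simp only [Functor.id_map] at w
  rw [← w]
  show F.map f.left ≫ (0 : F.obj (ModuleCat.of R PUnit) ⟶ N) = 0
  exact comp_zero

/-- build a morphism out of `rightObj` -/
def mkFromI {N : ModuleCat.{u} S} {X : Comma F (𝟭 (ModuleCat.{u} S))} (v : N ⟶ X.right) :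
    rightObj F N ⟶ X where
  left := 0
  right := v
  w := by
    show F.map 0 ≫ X.hom = (0 : F.obj (ModuleCat.of R PUnit) ⟶ N) ≫ v
    simp

/-- build a morphism into `rightObj` -/
def mkToI {N : ModuleCat.{u} S} {X : Comma F (𝟭 (ModuleCat.{u} S))} (v : X.right ⟶ N)
    (hv : X.hom ≫ v = 0) : X ⟶ rightObj F N where
  left := 0
  right := v
  w := by
    show F.map 0 ≫ (0 : F.obj (ModuleCat.of R PUnit) ⟶ N) = X.hom ≫ v
    simp [hv]

/-- The functor `N ↦ (0, N)`. -/
def iFun : ModuleCat.{u} S ⥤ Comma F (𝟭 (ModuleCat.{u} S)) where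
  obj N := rightObj F N
  map {M N} f := mkFromI F (f : M ⟶ ((rightObj F N).right))
  map_id N := by
    apply CommaMorphism.ext
    · exact punit_from_ext _ _
    · rfl
  map_comp f g := by
    apply CommaMorphism.ext
    · exact punit_from_ext _ _
    · rfl

@[simp] lemma iFun_obj (N : ModuleCat.{u} S) : (iFun F).obj N = rightObj F N := rfl
@[simp] lemma iFun_map_right {M N : ModuleCat.{u} S} (f : M ⟶ N) :
    ((iFun F).map f).right = f := rfl

/-- The cokernel functor `(A, B, φ) ↦ B / im φ`. -/
def cFun : Comma F (𝟭 (ModuleCat.{u} S)) ⥤ ModuleCat.{u} S where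
  obj X := ModuleCat.of S (X.right ⧸ LinearMap.range X.hom.hom)
  map {X Y} f := ModuleCat.ofHom (Submodule.mapQ _ _ f.right.hom (by
    rintro _ ⟨a, rfl⟩
    have w := f.w
    simp only [Functor.id_map] at w
    refine ⟨F.map f.left a, ?_⟩
    exact ConcreteCategory.congr_hom w a))
  map_id X := by
    apply ModuleCat.hom_ext
    apply Submodule.linearMap_qext
    rfl
  map_comp f g := by
    apply ModuleCat.hom_ext
    apply Submodule.linearMap_qext
    rfl

lemma cFun_map_mkQ {X Y : Comma F (𝟭 (ModuleCat.{u} S))} (f : X ⟶ Y) (x : X.right) :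
    (cFun F).map f (Submodule.Quotient.mk x : (cFun F).obj X)
      = (Submodule.Quotient.mk (f.right x) : (cFun F).obj Y) := rfl

/-- `cFun ⊣ iFun` -/
def adjCI : cFun F ⊣ iFun F :=
  Adjunction.mkOfHomEquiv
    { homEquiv := fun X N =>
        { toFun := fun g => mkToI F (ModuleCat.ofHom (LinearMap.range X.hom.hom).mkQ ≫ g)
            (by apply ModuleCat.hom_ext
                apply LinearMap.ext
                intro x
                show g (Submodule.Quotient.mk (X.hom x)) = 0
                rw [show (Submodule.Quotient.mk (X.hom x) : (cFun F).obj X) = 0 from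
                  (Submodule.Quotient.mk_eq_zero _).mpr ⟨x, rfl⟩]; exact map_zero _)
          invFun := fun f => ModuleCat.ofHom (Submodule.liftQ (LinearMap.range X.hom.hom)
            f.right.hom (by
            rintro _ ⟨a, rfl⟩
            exact ConcreteCategory.congr_hom (toI_comp_zero F f) a))
          left_inv := fun g => by
            apply ModuleCat.hom_ext
            apply Submodule.linearMap_qext
            rfl
          right_inv := fun f => by
            apply CommaMorphism.ext
            · exact punit_to_ext _ _
            · apply ModuleCat.hom_ext; apply LinearMap.ext; intro x; rfl }
      homEquiv_naturality_left_symm := fun f g => by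
        apply ModuleCat.hom_ext
        apply Submodule.linearMap_qext
        rfl
      homEquiv_naturality_right := fun f g => by
        apply CommaMorphism.ext
        · exact punit_to_ext _ _
        · rfl }

/-- `iFun ⊣ snd` -/
def adjIS : iFun F ⊣ Comma.snd F (𝟭 (ModuleCat.{u} S)) :=
  Adjunction.mkOfHomEquiv
    { homEquiv := fun N X =>
        { toFun := fun f => f.right
          invFun := fun v => mkFromI F v
          left_inv := fun f => by
            apply CommaMorphism.ext
            · exact punit_from_ext _ _
            · rfl
          right_inv := fun v => rfl }
      homEquiv_naturality_left_symm := fun f g => by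
        apply CommaMorphism.ext
        · exact punit_from_ext _ _
        · rfl
      homEquiv_naturality_right := fun f g => rfl }

instance : (iFun F).PreservesZeroMorphisms where
  map_zero M N := by
    apply CommaMorphism.ext
    · exact punit_from_ext _ _
    · rfl

instance : PreservesFiniteLimits (iFun F) := by
  have : PreservesLimitsOfSize.{u, u} (iFun F) := (adjCI F).rightAdjoint_preservesLimits
  exact PreservesLimitsOfSize.preservesFiniteLimits _

instance : PreservesFiniteColimits (iFun F) := by
  have : PreservesColimitsOfSize.{u, u} (iFun F) := (adjIS F).leftAdjoint_preservesColimits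
  exact PreservesColimitsOfSize.preservesFiniteColimits _

section Cofans

variable [∀ J : Type u, PreservesColimitsOfShape (Discrete J) F]

/-- Mapping a cofan of modules to the comma category. -/
def cofanI {ι : Type u} {Xs : ι → ModuleCat.{u} S} (c : Cofan Xs) :
    Cofan (fun j => rightObj F (Xs j)) :=
  Cofan.mk (rightObj F c.pt) (fun j => (iFun F).map (c.inj j))

def cofanIIsColimit {ι : Type u} {Xs : ι → ModuleCat.{u} S} (c : Cofan Xs)
    (hc : IsColimit c) : IsColimit (cofanI F c) :=
  mkCofanColimit _
    (fun s => mkFromI F (hc.desc (Cofan.mk s.pt.right (fun j => (s.inj j).right))))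
    (fun s j => by
      apply CommaMorphism.ext
      · exact punit_from_ext _ _
      · exact hc.fac (Cofan.mk s.pt.right (fun j => (s.inj j).right)) ⟨j⟩)
    (fun s m hm => by
      apply CommaMorphism.ext
      · exact punit_from_ext _ _
      · refine hc.uniq (Cofan.mk s.pt.right (fun j => (s.inj j).right)) m.right ?_
        rintro ⟨j⟩
        exact congrArg CommaMorphism.right (hm j))

/-- The right components of a cofan in the comma category. -/
def cofanSnd {ι : Type u} {Xs : ι → Comma F (𝟭 (ModuleCat.{u} S))} (c : Cofan Xs) :
    Cofan (fun j => (Xs j).right) :=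
  Cofan.mk c.pt.right (fun j => (c.inj j).right)

noncomputable def cofanSndIsColimit {ι : Type u} {Xs : ι → Comma F (𝟭 (ModuleCat.{u} S))}
    (c : Cofan Xs) (hc : IsColimit c) : IsColimit (cofanSnd F c) := by
  have hc' := isColimitOfPreserves (Comma.snd F (𝟭 (ModuleCat.{u} S))) hc
  let e : Discrete.functor (fun j => (Xs j).right) ≅
      Discrete.functor Xs ⋙ Comma.snd F (𝟭 (ModuleCat.{u} S)) :=
    Discrete.natIso (fun j => Iso.refl _)
  have L := (IsColimit.precomposeHomEquiv e
    ((Comma.snd F (𝟭 (ModuleCat.{u} S))).mapCocone c)).symm hc'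
  refine L.ofIsoColimit (Cocones.ext (Iso.refl _) ?_)
  rintro ⟨j⟩
  simp only [Cocone.precompose_obj_ι, NatTrans.comp_app, Functor.mapCocone_ι_app,
    Iso.refl_hom, Category.comp_id]
  show e.hom.app ⟨j⟩ ≫ (c.ι.app ⟨j⟩).right = (c.ι.app ⟨j⟩).right
  simp [e]

lemma isZero_pt_left {ι : Type u} {Xs : ι → Comma F (𝟭 (ModuleCat.{u} S))} (c : Cofan Xs)
    (hc : IsColimit c) (h : ∀ j, IsZero (Xs j).left) : IsZero c.pt.left := by
  have hc' := isColimitOfPreserves (Comma.fst F (𝟭 (ModuleCat.{u} S))) hc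
  rw [IsZero.iff_id_eq_zero]
  apply hc'.hom_ext
  rintro ⟨j⟩
  exact (h j).eq_of_src _ _

/-- An object with zero left part is isomorphic to `rightObj` of its right part. -/
def isoI {X : Comma F (𝟭 (ModuleCat.{u} S))} (hX : IsZero X.left) :
    X ≅ rightObj F X.right where
  hom := mkToI F (𝟙 X.right) (by
    have : X.hom = 0 := (F.map_isZero hX).eq_of_src _ _
    rw [this, zero_comp])
  inv := mkFromI F (𝟙 X.right)
  hom_inv_id := by
    apply CommaMorphism.ext
    · exact hX.eq_of_src _ _
    · simp [mkToI, mkFromI]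
      exact Category.comp_id _
  inv_hom_id := by
    apply CommaMorphism.ext
    · exact punit_from_ext _ _
    · show 𝟙 X.right ≫ 𝟙 X.right = 𝟙 (rightObj F X.right).right
      simp
      rfl

lemma gen_i_of_gen {B X : ModuleCat.{u} S} (h : X ∈ Gen B) :
    rightObj F X ∈ Gen (rightObj F B) := by
  obtain ⟨ι, c, hc, f, hf⟩ := h
  refine ⟨ι, cofanI F c, cofanIIsColimit F c hc,
    mkFromI F (f : c.pt ⟶ (rightObj F X).right), ?_⟩
  exact epi_of_components F _ (epi_of_isZero _ isZero_punit) hf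

lemma gen_of_gen_i {B : ModuleCat.{u} S} {Y : Comma F (𝟭 (ModuleCat.{u} S))}
    (h : Y ∈ Gen (rightObj F B)) : IsZero Y.left ∧ Y.right ∈ Gen B := by
  obtain ⟨ι, c, hc, f, hf⟩ := h
  haveI := hf
  have hz : IsZero c.pt.left := isZero_pt_left F c hc (fun _ => isZero_punit)
  obtain ⟨hl, hr⟩ := epi_components F f
  constructor
  · exact isZero_of_epi f.left hz
  · exact ⟨ι, cofanSnd F c, cofanSndIsColimit F c hc, f.right, hr⟩

end Cofans

section Pair

instance : (iFun F).PreservesEpimorphisms where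
  preserves f hf := epi_of_components F _ (epi_of_isZero _ isZero_punit) hf

instance : (Comma.snd F (𝟭 (ModuleCat.{u} S))).PreservesEpimorphisms where
  preserves f hf := by haveI := hf; exact (epi_components F f).2

lemma projective_cObj {X : Comma F (𝟭 (ModuleCat.{u} S))} (hX : Projective X) :
    Projective ((cFun F).obj X) :=
  (adjCI F).map_projective X hX

lemma projective_rightObj {N : ModuleCat.{u} S} (hN : Projective N) :
    Projective (rightObj F N) :=
  (adjIS F).map_projective N hN

/-- morphisms out of `pairObj` -/
def mkPair {P : ModuleCat.{u} R} {Q : ModuleCat.{u} S} {X : Comma F (𝟭 (ModuleCat.{u} S))}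
    (u : P ⟶ X.left) (w : Q ⟶ X.right) : pairObj F P Q ⟶ X where
  left := u
  right := ModuleCat.ofHom (LinearMap.coprod (F.map u ≫ X.hom).hom w.hom)
  w := by
    show F.map u ≫ X.hom = (pairObj F P Q).hom ≫ _
    apply ModuleCat.hom_ext
    apply LinearMap.ext
    intro x
    show (X.hom (F.map u x)) = LinearMap.coprod (X.hom.hom ∘ₗ (F.map u).hom) w.hom (x, 0)
    simp

@[simp] lemma mkPair_left {P : ModuleCat.{u} R} {Q : ModuleCat.{u} S}
    {X : Comma F (𝟭 (ModuleCat.{u} S))} (u : P ⟶ X.left) (w : Q ⟶ X.right) :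
    (mkPair F u w).left = u := rfl

lemma mkPair_right_inl {P : ModuleCat.{u} R} {Q : ModuleCat.{u} S}
    {X : Comma F (𝟭 (ModuleCat.{u} S))} (u : P ⟶ X.left) (w : Q ⟶ X.right) (x : F.obj P) :
    (mkPair F u w).right (x, 0) = X.hom (F.map u x) := by
  show LinearMap.coprod (X.hom.hom ∘ₗ (F.map u).hom) w.hom (x, 0) = X.hom (F.map u x)
  simp

lemma mkPair_right_inr {P : ModuleCat.{u} R} {Q : ModuleCat.{u} S}
    {X : Comma F (𝟭 (ModuleCat.{u} S))} (u : P ⟶ X.left) (w : Q ⟶ X.right) (q : Q) :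
    (mkPair F u w).right (0, q) = w q := by
  show LinearMap.coprod (X.hom.hom ∘ₗ (F.map u).hom) w.hom (0, q) = w q
  simp

lemma pair_hom_w {P : ModuleCat.{u} R} {Q : ModuleCat.{u} S}
    {X : Comma F (𝟭 (ModuleCat.{u} S))} (f : pairObj F P Q ⟶ X) (x : F.obj P) :
    f.right (x, 0) = X.hom (F.map f.left x) := by
  have w := f.w
  simp only [Functor.id_map] at w
  exact (ConcreteCategory.congr_hom w x).symm

lemma projective_pairObj {P : ModuleCat.{u} R} {Q : ModuleCat.{u} S}
    (hP : Projective P) (hQ : Projective Q) : Projective (pairObj F P Q) := by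
  constructor
  intro E X' f e he
  obtain ⟨hel, her⟩ := epi_components F e
  obtain ⟨u, hu⟩ := hP.factors f.left e.left
  obtain ⟨w, hw⟩ :=
    hQ.factors ((ModuleCat.ofHom (LinearMap.inr S (F.obj P) Q) : Q ⟶ (pairObj F P Q).right) ≫ f.right) e.right
  refine ⟨mkPair F u w, ?_⟩
  apply CommaMorphism.ext
  · exact hu
  · apply ModuleCat.hom_ext; apply LinearMap.ext
    rintro ⟨x, q⟩
    show e.right ((mkPair F u w).right (x, q)) = f.right (x, q)
    have hq : ((x, q) : (pairObj F P Q).right) = ((x, 0) : (pairObj F P Q).right) + ((0, q) : (pairObj F P Q).right) := by simp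
    rw [hq, show (mkPair F u w).right (((x, 0) : (pairObj F P Q).right) + ((0, q) : (pairObj F P Q).right))
        = (mkPair F u w).right ((x, 0) : (pairObj F P Q).right) + (mkPair F u w).right ((0, q) : (pairObj F P Q).right) from map_add _ _ _, map_add,
      show f.right (((x, 0) : (pairObj F P Q).right) + ((0, q) : (pairObj F P Q).right)) = f.right ((x, 0) : (pairObj F P Q).right) + f.right ((0, q) : (pairObj F P Q).right) from map_add _ _ _]
    congr 1
    · rw [mkPair_right_inl]
      have he' := e.w
      simp only [Functor.id_map] at he'
      have h1 : e.right (E.hom (F.map u x)) = X'.hom (F.map e.left (F.map u x)) :=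
        (ConcreteCategory.congr_hom he' (F.map u x)).symm
      have h2 : F.map u ≫ F.map e.left = F.map f.left := by rw [← F.map_comp, hu]; rfl
      rw [h1, show (F.map e.left) ((F.map u) x) = (F.map f.left) x from ConcreteCategory.congr_hom h2 x,
        ← pair_hom_w F f x]
    · rw [mkPair_right_inr]
      have := ConcreteCategory.congr_hom hw q
      exact this

lemma pairMap_comp_right_apply {P₁ P₀ : ModuleCat.{u} R} {Q₁ Q₀ : ModuleCat.{u} S}
    (a : P₁ ⟶ P₀) (b : Q₁ ⟶ Q₀) {X : Comma F (𝟭 (ModuleCat.{u} S))}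
    (h : pairObj F P₀ Q₀ ⟶ X) (z : F.obj P₁ × Q₁) :
    (pairMap F a b ≫ h).right z = h.right (LinearMap.prodMap (F.map a).hom b.hom z) := rfl

lemma mem_Dclass_pairMap_iff {P₁ P₀ : ModuleCat.{u} R} {Q₁ Q₀ : ModuleCat.{u} S}
    (a : P₁ ⟶ P₀) (b : Q₁ ⟶ Q₀) (X : Comma F (𝟭 (ModuleCat.{u} S))) :
    X ∈ Dclass (pairMap F a b) ↔ X.left ∈ Dclass a ∧ X.right ∈ Dclass b := by
  constructor
  · intro hD
    constructor
    · intro g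
      obtain ⟨h, hh⟩ := hD (mkPair F g 0)
      exact ⟨h.left, congrArg CommaMorphism.left hh⟩
    · intro g
      obtain ⟨h, hh⟩ := hD (mkPair F 0 g)
      refine ⟨(ModuleCat.ofHom (LinearMap.inr S (F.obj P₀) Q₀) : Q₀ ⟶ (pairObj F P₀ Q₀).right) ≫ h.right, ?_⟩
      apply ModuleCat.hom_ext
      apply LinearMap.ext
      intro q
      have h1 := ConcreteCategory.congr_hom (congrArg CommaMorphism.right hh) ((0, q) : F.obj P₁ × Q₁)
      rw [pairMap_comp_right_apply, mkPair_right_inr] at h1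
      show h.right ((0 : F.obj P₀), b q) = g q
      rw [← h1]
      congr 1
      simp
      rfl
  · rintro ⟨hl, hr⟩ g
    obtain ⟨h₁, hh₁⟩ := hl g.left
    obtain ⟨h₂, hh₂⟩ :=
      hr ((ModuleCat.ofHom (LinearMap.inr S (F.obj P₁) Q₁) : Q₁ ⟶ (pairObj F P₁ Q₁).right) ≫ g.right)
    refine ⟨mkPair F h₁ h₂, ?_⟩
    apply CommaMorphism.ext
    · exact hh₁
    · apply ModuleCat.hom_ext; apply LinearMap.ext
      rintro ⟨x, q⟩
      rw [show ((x, q) : (pairObj F P₁ Q₁).right) = ((x, 0) : (pairObj F P₁ Q₁).right) + ((0, q) : (pairObj F P₁ Q₁).right) by simp,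
        show (pairMap F a b ≫ mkPair F h₁ h₂).right.hom (((x, 0) : (pairObj F P₁ Q₁).right) + ((0, q) : (pairObj F P₁ Q₁).right)) = (pairMap F a b ≫ mkPair F h₁ h₂).right.hom ((x, 0) : (pairObj F P₁ Q₁).right) + (pairMap F a b ≫ mkPair F h₁ h₂).right.hom ((0, q) : (pairObj F P₁ Q₁).right) from map_add _ _ _,
        show g.right.hom (((x, 0) : (pairObj F P₁ Q₁).right) + ((0, q) : (pairObj F P₁ Q₁).right)) = g.right.hom ((x, 0) : (pairObj F P₁ Q₁).right) + g.right.hom ((0, q) : (pairObj F P₁ Q₁).right) from map_add _ _ _]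
      congr 1
      · rw [pairMap_comp_right_apply]
        have e1 : LinearMap.prodMap (F.map a).hom b.hom ((x, 0) : F.obj P₁ × Q₁)
            = ((F.map a x : F.obj P₀), (0 : Q₀)) := by simp
        rw [e1, mkPair_right_inl, pair_hom_w F g x]
        have h2 : F.map a ≫ F.map h₁ = F.map g.left := by rw [← F.map_comp, hh₁]; rfl
        rw [show (F.map h₁) ((F.map a) x) = (F.map g.left) x from ConcreteCategory.congr_hom h2 x]
      · rw [pairMap_comp_right_apply]
        have e1 : LinearMap.prodMap (F.map a).hom b.hom ((0, q) : F.obj P₁ × Q₁)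
            = ((0 : F.obj P₀), b q) := by simp
        rw [e1, mkPair_right_inr]
        have := ConcreteCategory.congr_hom hh₂ q
        exact this

lemma mem_Dclass_zeroR_iff (M : ModuleCat.{u} R) :
    M ∈ Dclass (0 : ModuleCat.of R R ⟶ ModuleCat.of R PUnit) ↔ IsZero M := by
  constructor
  · intro h
    haveI : Subsingleton M.carrier := by
      refine subsingleton_of_forall_eq 0 (fun m => ?_)
      obtain ⟨h', hh⟩ := h (ModuleCat.ofHom (LinearMap.toSpanSingleton R M m))
      have : ((0 : ModuleCat.of R R ⟶ ModuleCat.of R PUnit) ≫ h') (1 : R)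
          = ModuleCat.ofHom (LinearMap.toSpanSingleton R M m) (1 : R) := by rw [hh]
      have h0 : ((0 : ModuleCat.of R R ⟶ ModuleCat.of R PUnit) ≫ h') (1 : R) = 0 := by
        rw [zero_comp]; rfl
      rw [h0] at this
      simpa using this.symm
    exact ModuleCat.isZero_of_subsingleton M
  · intro h g
    exact ⟨0, h.eq_of_tgt _ _⟩

end Pair

section ExactTransfer

lemma eq_zero_of_isZero_module {T : Type u} [Ring T] {M : ModuleCat.{u} T}
    (h : IsZero M) (x : M) : x = 0 := by
  have h1 : 𝟙 M = 0 := (IsZero.iff_id_eq_zero (X := M)).mp h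
  calc x = (𝟙 M) x := rfl
  _ = (0 : M ⟶ M) x := by rw [h1]
  _ = 0 := rfl

lemma projective_of_isZero {𝒟 : Type*} [Category 𝒟] [Limits.HasZeroMorphisms 𝒟]
    {X : 𝒟} (h : IsZero X) : Projective X := by
  constructor
  intro E Y f e he
  exact ⟨0, by rw [zero_comp]; exact (h.eq_of_src _ _)⟩

lemma projective_punit {T : Type u} [Ring T] : Projective (ModuleCat.of T PUnit) :=
  projective_of_isZero isZero_punit

lemma projective_ofSelf : Projective (ModuleCat.of R R) :=
  ModuleCat.projective_of_free (Module.Basis.singleton PUnit.{u+1} R)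

lemma isZero_middle {T : Type u} [Ring T] {E : ShortComplex (ModuleCat.{u} T)}
    (hE : E.ShortExact) (h1 : IsZero E.X₁) (h3 : IsZero E.X₃) : IsZero E.X₂ := by
  haveI : Subsingleton E.X₂.carrier := by
    refine subsingleton_of_forall_eq 0 (fun x => ?_)
    have hg : E.g x = 0 := eq_zero_of_isZero_module h3 _
    obtain ⟨y, hy⟩ := (ShortComplex.moduleCat_exact_iff E).mp hE.exact x hg
    rw [← hy, eq_zero_of_isZero_module h1 y, map_zero]
  exact ModuleCat.isZero_of_subsingleton _

lemma exact_right_components {X Y Z : Comma F (𝟭 (ModuleCat.{u} S))} {f : X ⟶ Y} {g : Y ⟶ Z}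
    {w : f ≫ g = 0} (h : (ShortComplex.mk f g w).Exact) :
    ∀ y : Y.right, g.right y = 0 → ∃ x : X.right, f.right x = y := by
  have h2 := h.map (Comma.snd F (𝟭 (ModuleCat.{u} S)))
  rw [ShortComplex.moduleCat_exact_iff] at h2
  exact h2

lemma shortExact_map_snd {E : ShortComplex (Comma F (𝟭 (ModuleCat.{u} S)))}
    (hE : E.ShortExact) : (E.map (Comma.snd F (𝟭 (ModuleCat.{u} S)))).ShortExact := by
  haveI := hE.mono_f
  haveI := hE.epi_g
  exact
    { exact := hE.exact.map _
      mono_f := (mono_components F E.f).2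
      epi_g := (epi_components F E.g).2 }

lemma shortExact_map_fst {E : ShortComplex (Comma F (𝟭 (ModuleCat.{u} S)))}
    (hE : E.ShortExact) : (E.map (Comma.fst F (𝟭 (ModuleCat.{u} S)))).ShortExact := by
  haveI := hE.mono_f
  haveI := hE.epi_g
  exact
    { exact := hE.exact.map _
      mono_f := (mono_components F E.f).1
      epi_g := (epi_components F E.g).1 }

lemma shortExact_map_i {E : ShortComplex (ModuleCat.{u} S)} (hE : E.ShortExact) :
    (E.map (iFun F)).ShortExact := by
  haveI := hE.mono_f
  haveI := hE.epi_g
  exact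
    { exact := hE.exact.map _
      mono_f := mono_of_components F ((iFun F).map E.f) (⟨fun u v _ => punit_to_ext u v⟩)
        (by show Mono E.f; infer_instance)
      epi_g := epi_of_components F ((iFun F).map E.g) (epi_of_isZero _ isZero_punit)
        (by show Epi E.g; infer_instance) }

end ExactTransfer

section CPres

variable {B : ModuleCat.{u} S}

/-- Applying the cokernel functor to a projective presentation of `(0,B)` yields a
projective presentation of `B`. -/
noncomputable def cPres (q : ProjPres (rightObj F B)) : ProjPres B where
  P₁ := (cFun F).obj q.P₁
  P₀ := (cFun F).obj q.P₀
  σ := (cFun F).map q.σ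
  π := ModuleCat.ofHom (Submodule.liftQ _ q.π.right.hom (by
    rintro _ ⟨a, rfl⟩
    exact ConcreteCategory.congr_hom (toI_comp_zero F q.π) a))
  projective₁ := projective_cObj F q.projective₁
  projective₀ := projective_cObj F q.projective₀
  epi := by
    haveI := q.epi
    have hsur : Function.Surjective q.π.right :=
      (ModuleCat.epi_iff_surjective _).mp (epi_components F q.π).2
    refine (ModuleCat.epi_iff_surjective _).mpr ?_
    intro b
    obtain ⟨y, hy⟩ := hsur b
    exact ⟨Submodule.Quotient.mk y, hy⟩
  w := by
    apply ModuleCat.hom_ext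
    apply Submodule.linearMap_qext
    apply LinearMap.ext
    intro x
    have h0 := congrArg CommaMorphism.right q.w
    have h1 : q.π.right (q.σ.right x) = 0 := ConcreteCategory.congr_hom h0 x
    exact h1
  exact := by
    rw [ShortComplex.moduleCat_exact_iff]
    intro x hx
    obtain ⟨y, rfl⟩ := Submodule.mkQ_surjective _ x
    have h2 : q.π.right y = 0 := hx
    obtain ⟨z, hz⟩ := exact_right_components F q.exact y h2
    refine ⟨Submodule.Quotient.mk z, ?_⟩
    show Submodule.Quotient.mk (q.σ.right z) = Submodule.Quotient.mk y
    rw [hz]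

lemma mem_Dclass_c_iff (q : ProjPres (rightObj F B)) (X : ModuleCat.{u} S) :
    X ∈ Dclass ((cFun F).map q.σ) ↔ rightObj F X ∈ Dclass q.σ := by
  constructor
  · intro hX g
    have hg : ∀ a ∈ LinearMap.range q.P₁.hom.hom, g.right a = 0 := by
      rintro _ ⟨a, rfl⟩
      exact ConcreteCategory.congr_hom (toI_comp_zero F g) a
    obtain ⟨h, hh⟩ := hX (ModuleCat.ofHom (Submodule.liftQ _ g.right.hom (fun a ha => hg a ha)))
    refine ⟨mkToI F (ModuleCat.ofHom (LinearMap.range q.P₀.hom.hom).mkQ ≫ h) (by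
      apply ModuleCat.hom_ext
      apply LinearMap.ext
      intro x
      show h (Submodule.Quotient.mk (q.P₀.hom x)) = 0
      rw [show (Submodule.Quotient.mk (q.P₀.hom x) : ((cFun F).obj q.P₀)) = 0 from
        (Submodule.Quotient.mk_eq_zero _).mpr ⟨x, rfl⟩]; exact map_zero _), ?_⟩
    apply CommaMorphism.ext
    · exact punit_to_ext _ _
    · apply ModuleCat.hom_ext; apply LinearMap.ext
      intro x
      show h (Submodule.Quotient.mk (q.σ.right x)) = g.right x
      have := ConcreteCategory.congr_hom hh (Submodule.Quotient.mk x)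
      exact this
  · intro hX g
    obtain ⟨H, hH⟩ := hX (mkToI F (ModuleCat.ofHom (LinearMap.range q.P₁.hom.hom).mkQ ≫ g) (by
      apply ModuleCat.hom_ext
      apply LinearMap.ext
      intro x
      show g (Submodule.Quotient.mk (q.P₁.hom x)) = 0
      rw [show (Submodule.Quotient.mk (q.P₁.hom x) : ((cFun F).obj q.P₁)) = 0 from
        (Submodule.Quotient.mk_eq_zero _).mpr ⟨x, rfl⟩]; exact map_zero _))
    refine ⟨ModuleCat.ofHom (Submodule.liftQ _ H.right.hom (by
      rintro _ ⟨a, rfl⟩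
      exact ConcreteCategory.congr_hom (toI_comp_zero F H) a)), ?_⟩
    apply ModuleCat.hom_ext
    apply Submodule.linearMap_qext
    apply LinearMap.ext
    intro x
    show H.right (q.σ.right x) = g (Submodule.Quotient.mk x)
    have := ConcreteCategory.congr_hom (congrArg CommaMorphism.right hH) x
    exact this

end CPres

section IPres

variable {B : ModuleCat.{u} S}

def iPresPi (p : ProjPres B) : pairObj F (ModuleCat.of R PUnit) p.P₀ ⟶ rightObj F B :=
  mkToI F (ModuleCat.ofHom (LinearMap.coprod 0 p.π.hom)) (by
    apply ModuleCat.hom_ext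
    apply LinearMap.ext
    intro x
    show LinearMap.coprod (0 : F.obj (ModuleCat.of R PUnit) →ₗ[S] B) p.π.hom (x, 0) = 0
    simp
    rfl)

lemma iPresW (p : ProjPres B) :
    pairMap F (0 : ModuleCat.of R R ⟶ ModuleCat.of R PUnit) p.σ ≫ iPresPi F p = 0 := by
  apply CommaMorphism.ext
  · exact punit_to_ext _ _
  · apply ModuleCat.hom_ext; apply LinearMap.ext
    rintro ⟨x, q⟩
    show LinearMap.coprod (0 : F.obj (ModuleCat.of R PUnit) →ₗ[S] B) p.π.hom
      (LinearMap.prodMap (F.map 0).hom p.σ.hom (x, q)) = 0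
    have hw : p.π (p.σ q) = 0 := ConcreteCategory.congr_hom p.w q
    simp [hw]

lemma iPresExact (p : ProjPres B) :
    (ShortComplex.mk (pairMap F (0 : ModuleCat.of R R ⟶ ModuleCat.of R PUnit) p.σ)
      (iPresPi F p) (iPresW F p)).Exact := by
  have hSb : ((ShortComplex.mk p.σ p.π p.w).map (iFun F)).Exact := p.exact.map (iFun F)
  let τ₁ : pairObj F (ModuleCat.of R R) p.P₁ ⟶ rightObj F p.P₁ :=
    mkToI F (ModuleCat.ofHom (LinearMap.snd S (F.obj (ModuleCat.of R R)) p.P₁)) (by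
      apply ModuleCat.hom_ext
      apply LinearMap.ext
      intro x
      rfl)
  let τ₂ : pairObj F (ModuleCat.of R PUnit) p.P₀ ⟶ rightObj F p.P₀ :=
    mkToI F (ModuleCat.ofHom (LinearMap.snd S (F.obj (ModuleCat.of R PUnit)) p.P₀)) (by
      apply ModuleCat.hom_ext
      apply LinearMap.ext
      intro x
      rfl)
  let φ : ShortComplex.mk (pairMap F (0 : ModuleCat.of R R ⟶ ModuleCat.of R PUnit) p.σ)
      (iPresPi F p) (iPresW F p) ⟶ (ShortComplex.mk p.σ p.π p.w).map (iFun F) :=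
    { τ₁ := τ₁
      τ₂ := τ₂
      τ₃ := 𝟙 _
      comm₁₂ := by
        apply CommaMorphism.ext
        · exact punit_to_ext _ _
        · apply ModuleCat.hom_ext; apply LinearMap.ext
          rintro ⟨x, q⟩
          rfl
      comm₂₃ := by
        apply CommaMorphism.ext
        · exact punit_to_ext _ _
        · apply ModuleCat.hom_ext; apply LinearMap.ext
          rintro ⟨x, q⟩
          show p.π q = LinearMap.coprod (0 : F.obj (ModuleCat.of R PUnit) →ₗ[S] B) p.π.hom (x, q)
          simp }
  haveI : Epi φ.τ₁ := epi_of_components F τ₁ (epi_of_isZero _ isZero_punit)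
    ((ModuleCat.epi_iff_surjective _).mpr (fun y => ⟨(0, y), rfl⟩))
  haveI : IsIso φ.τ₂ := by
    refine ⟨mkFromI F (ModuleCat.ofHom (LinearMap.inr S (F.obj (ModuleCat.of R PUnit)) p.P₀)), ?_, ?_⟩
    · apply CommaMorphism.ext
      · exact punit_from_ext _ _
      · apply ModuleCat.hom_ext; apply LinearMap.ext
        rintro ⟨x, q⟩
        show ((0 : F.obj (ModuleCat.of R PUnit)), q) = (x, q)
        exact Prod.ext (eq_zero_of_isZero_module (isZero_FPUnit F) x).symm rfl
    · apply CommaMorphism.ext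
      · exact punit_from_ext _ _
      · apply ModuleCat.hom_ext; apply LinearMap.ext
        intro q
        rfl
  haveI : Mono φ.τ₃ := by
    show Mono (𝟙 (rightObj F B))
    infer_instance
  exact (ShortComplex.exact_iff_of_epi_of_isIso_of_mono φ).mpr hSb

/-- A projective presentation of `B` induces one of `(0,B)`. -/
noncomputable def iPres (p : ProjPres B) : ProjPres (rightObj F B) where
  P₁ := pairObj F (ModuleCat.of R R) p.P₁
  P₀ := pairObj F (ModuleCat.of R PUnit) p.P₀
  σ := pairMap F (0 : ModuleCat.of R R ⟶ ModuleCat.of R PUnit) p.σ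
  π := iPresPi F p
  projective₁ := projective_pairObj F projective_ofSelf p.projective₁
  projective₀ := projective_pairObj F projective_punit p.projective₀
  epi := by
    haveI := p.epi
    refine epi_of_components F _ (epi_of_isZero _ isZero_punit) ?_
    rw [ModuleCat.epi_iff_surjective]
    intro b
    obtain ⟨y, hy⟩ := (ModuleCat.epi_iff_surjective p.π).mp p.epi b
    exact ⟨(0, y), by
      show LinearMap.coprod (0 : F.obj (ModuleCat.of R PUnit) →ₗ[S] B) p.π.hom (0, y) = b
      simp [hy]
      exact zero_add _⟩
  w := iPresW F p
  exact := iPresExact F p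

lemma Dclass_iPres (p : ProjPres B) (X : Comma F (𝟭 (ModuleCat.{u} S))) :
    X ∈ Dclass (iPres F p).σ ↔ IsZero X.left ∧ X.right ∈ Dclass p.σ := by
  exact (mem_Dclass_pairMap_iff F (0 : ModuleCat.of R R ⟶ ModuleCat.of R PUnit) p.σ X).trans
    (and_congr_left' (mem_Dclass_zeroR_iff X.left))

end IPres

section Main

variable {B : ModuleCat.{u} S}

lemma isSilting_i_of_isSilting (h : IsSilting B) : IsSilting (rightObj F B) := by
  obtain ⟨p, hp⟩ := h
  refine ⟨iPres F p, ?_⟩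
  ext X
  constructor
  · intro hX
    obtain ⟨hz, hr⟩ := (Dclass_iPres F p X).mp hX
    rw [hp] at hr
    exact gen_iso (isoI F hz).symm (gen_i_of_gen F hr)
  · intro hX
    obtain ⟨hz, hr⟩ := gen_of_gen_i F hX
    exact (Dclass_iPres F p X).mpr ⟨hz, by rw [hp]; exact hr⟩

lemma isSilting_of_isSilting_i (h : IsSilting (rightObj F B)) : IsSilting B := by
  obtain ⟨q, hq⟩ := h
  refine ⟨cPres F q, ?_⟩
  ext X
  constructor
  · intro hX
    have h1 := (mem_Dclass_c_iff F q X).mp hX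
    rw [hq] at h1
    exact (gen_of_gen_i F h1).2
  · intro hX
    exact (mem_Dclass_c_iff F q X).mpr (by rw [hq]; exact gen_i_of_gen F hX)

lemma isPartialSilting_i_of_isPartialSilting (h : IsPartialSilting B) :
    IsPartialSilting (rightObj F B) := by
  obtain ⟨p, ⟨hepi, hcop, hext⟩, hmem⟩ := h
  refine ⟨iPres F p, ⟨?_, ?_, ?_⟩, (Dclass_iPres F p _).mpr ⟨isZero_punit, hmem⟩⟩
  · intro X Y f hf hX
    obtain ⟨hz, hr⟩ := (Dclass_iPres F p X).mp hX
    haveI := hf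
    obtain ⟨hfl, hfr⟩ := epi_components F f
    exact (Dclass_iPres F p Y).mpr ⟨isZero_of_epi f.left hz, hepi f.right hfr hr⟩
  · intro ι Xs c hc hXs
    refine (Dclass_iPres F p c.pt).mpr
      ⟨isZero_pt_left F c hc (fun j => ((Dclass_iPres F p _).mp (hXs j)).1), ?_⟩
    exact hcop ι (fun j => (Xs j).right) (cofanSnd F c) (cofanSndIsColimit F c hc)
      (fun j => ((Dclass_iPres F p _).mp (hXs j)).2)
  · intro E hE h1 h3
    obtain ⟨hz1, hr1⟩ := (Dclass_iPres F p E.X₁).mp h1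
    obtain ⟨hz3, hr3⟩ := (Dclass_iPres F p E.X₃).mp h3
    refine (Dclass_iPres F p E.X₂).mpr ⟨?_, ?_⟩
    · exact isZero_middle (shortExact_map_fst F hE) hz1 hz3
    · exact hext (E.map (Comma.snd F (𝟭 (ModuleCat.{u} S)))) (shortExact_map_snd F hE) hr1 hr3

lemma isPartialSilting_of_isPartialSilting_i (h : IsPartialSilting (rightObj F B)) :
    IsPartialSilting B := by
  obtain ⟨q, ⟨hepi, hcop, hext⟩, hmem⟩ := h
  refine ⟨cPres F q, ⟨?_, ?_, ?_⟩, (mem_Dclass_c_iff F q B).mpr hmem⟩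
  · intro X Y f hf hX
    have h1 := (mem_Dclass_c_iff F q X).mp hX
    haveI := hf
    haveI h2 : Epi ((iFun F).map f) := (iFun F).map_epi f
    exact (mem_Dclass_c_iff F q Y).mpr (hepi ((iFun F).map f) h2 h1)
  · intro ι Xs c hc hXs
    refine (mem_Dclass_c_iff F q c.pt).mpr ?_
    exact hcop ι (fun j => rightObj F (Xs j)) (cofanI F c) (cofanIIsColimit F c hc)
      (fun j => (mem_Dclass_c_iff F q (Xs j)).mp (hXs j))
  · intro E hE h1 h3
    have hE' := shortExact_map_i F hE
    have h2 := hext (E.map (iFun F)) hE' ((mem_Dclass_c_iff F q E.X₁).mp h1)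
      ((mem_Dclass_c_iff F q E.X₃).mp h3)
    exact (mem_Dclass_c_iff F q E.X₂).mpr h2

end Main

end RightObjSilting

/-- Corollary.  Assume `F` commutes with direct sums.  Then `(0,B)` is
silting (respectively, partial silting) in the comma category `(F, S-Mod)` if and only if
`B` is silting (respectively, partial silting) as a left `S`-module. -/
theorem rightObj_silting_iff {R S : Type u} [Ring R] [Ring S]
    (F : ModuleCat.{u} R ⥤ ModuleCat.{u} S) [F.Additive] [PreservesFiniteColimits F]
    [∀ J : Type u, PreservesColimitsOfShape (Discrete J) F]
    (B : ModuleCat.{u} S) :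
    (IsSilting (rightObj F B) ↔ IsSilting B) ∧
    (IsPartialSilting (rightObj F B) ↔ IsPartialSilting B) :=
  ⟨⟨RightObjSilting.isSilting_of_isSilting_i F, RightObjSilting.isSilting_i_of_isSilting F⟩,
   ⟨RightObjSilting.isPartialSilting_of_isPartialSilting_i F,
    RightObjSilting.isPartialSilting_i_of_isPartialSilting F⟩⟩
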